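/- Let (W,S) be an irreducible Coxeter system, α ∈ Φ a root, and Z the stabilizer of α in W. Then the linear span of the orbit Wα equals the linear span of Φ, W acts faithfully on Wα, the intersection of all W-conjugates of Z is trivial, and if the orbit Wα is finite then W is finite. -/

import Mathlib

open scoped BigOperators

/-- Nonnegative conical span of a subset of a real vector space. -/
def nnCone {V : Type*} [AddCommGroup V] [Module ℝ V] (Γ : Set V) : Set V :=
  { v | ∃ (s : Finset V) (c : V → ℝ), ↑s ⊆ Γ ∧ (∀ x ∈ s, 0 ≤ c x) ∧ v = ∑ x ∈ s, c x • x }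

/-- A based root system for a Coxeter system, in a real quadratic space. -/
structure BasedRootSystem (V : Type*) [AddCommGroup V] [Module ℝ V] where
  form : V →ₗ[ℝ] V →ₗ[ℝ] ℝ
  form_symm : ∀ u v, form u v = form v u
  simples : Set V
  posIndep : ∀ s : Finset V, ↑s ⊆ simples → ∀ c : V → ℝ,
      (∀ v ∈ s, 0 < c v) → ∑ v ∈ s, c v • v = 0 → s = ∅
  norm_one : ∀ α ∈ simples, form α α = 1
  pairing : ∀ α ∈ simples, ∀ β ∈ simples, α ≠ β →
      (∃ m : ℕ, 2 ≤ m ∧ form α β = -Real.cos (Real.pi / (m : ℝ))) ∨ form α β ≤ -1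

namespace BasedRootSystem

variable {V : Type*} [AddCommGroup V] [Module ℝ V]

/-- `g` is the reflection in the vector `α` (so `g v = v - ⟨v, α^∨⟩ α` with
`α^∨ = (2/⟨α,α⟩)α`). -/
def IsRefl (R : BasedRootSystem V) (α : V) (g : V ≃ₗ[ℝ] V) : Prop :=
  ∀ v, g v = v - ((2 / R.form α α) * R.form v α) • α

/-- The Coxeter group `W`, generated by the simple reflections. -/
def W (R : BasedRootSystem V) : Subgroup (V ≃ₗ[ℝ] V) :=
  Subgroup.closure { g | ∃ α ∈ R.simples, R.IsRefl α g }

/-- The reflection subgroup generated by reflections in the elements of `Δ`. -/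
def subW (R : BasedRootSystem V) (Δ : Set V) : Subgroup (V ≃ₗ[ℝ] V) :=
  Subgroup.closure { g | ∃ α ∈ Δ, R.IsRefl α g }

/-- The root system `Φ = WΠ`. -/
def roots (R : BasedRootSystem V) : Set V :=
  { β | ∃ w ∈ R.W, ∃ α ∈ R.simples, β = w α }

/-- The positive roots `Φ⁺ = Φ ∩ ℝ_{≥0}Π`. -/
def posRoots (R : BasedRootSystem V) : Set V := R.roots ∩ nnCone R.simples

/-- The fundamental chamber `𝒞`. -/
def chamber (R : BasedRootSystem V) : Set V := { v | ∀ α ∈ R.simples, 0 ≤ R.form v α }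

/-- `𝒦 = ℝ_{≥0}Π ∩ (−𝒞)`. -/
def K (R : BasedRootSystem V) : Set V :=
  nnCone R.simples ∩ { v | ∀ α ∈ R.simples, R.form v α ≤ 0 }

/-- The imaginary cone `𝒵 = ⋃_{w ∈ W} w(𝒦)`. -/
def imaginaryCone (R : BasedRootSystem V) : Set V :=
  { v | ∃ w ∈ R.W, ∃ k ∈ R.K, v = w k }

/-- The standard length function of `(W,S)`. -/
noncomputable def length (R : BasedRootSystem V) (w : V ≃ₗ[ℝ] V) : ℕ :=
  sInf { n | ∃ l : List (V ≃ₗ[ℝ] V), l.length = n ∧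
      (∀ g ∈ l, ∃ α ∈ R.simples, R.IsRefl α g) ∧ w = l.prod }

/-- Irreducibility of the Coxeter system: the Coxeter graph on `Π` is connected. -/
def Irred (R : BasedRootSystem V) : Prop :=
  ∀ A B : Set V, A ∪ B = R.simples → (∀ a ∈ A, ∀ b ∈ B, R.form a b = 0) →
    A = ∅ ∨ B = ∅

/-- `Δ` is a support of `v`: `v` is a strictly positive combination of `Δ ⊆ Π`. -/
def IsSupport (R : BasedRootSystem V) (Δ : Finset V) (v : V) : Prop :=
  ↑Δ ⊆ R.simples ∧ ∃ c : V → ℝ, (∀ x ∈ Δ, 0 < c x) ∧ v = ∑ x ∈ Δ, c x • x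

/-- `Δ` is connected in the Coxeter graph. -/
def ConnSubset (R : BasedRootSystem V) (Δ : Finset V) : Prop :=
  ∀ x ∈ Δ, ∀ y ∈ Δ, Relation.ReflTransGen
    (fun a b => a ∈ Δ ∧ b ∈ Δ ∧ R.form a b ≠ 0) x y

end BasedRootSystem

namespace S5

open BasedRootSystem

variable {V : Type*} [AddCommGroup V] [Module ℝ V]

/-- The reflection in `π`, as a linear map. -/
noncomputable def sLM (R : BasedRootSystem V) (π : V) : V →ₗ[ℝ] V where
  toFun v := v - (2 * R.form v π) • π
  map_add' x y := by
    simp only [map_add, LinearMap.add_apply]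
    rw [mul_add, add_smul]; abel
  map_smul' c x := by
    simp only [map_smul, LinearMap.smul_apply, RingHom.id_apply, smul_eq_mul]
    rw [smul_sub, smul_smul]; ring_nf

lemma sLM_invol (R : BasedRootSystem V) {π : V} (h : R.form π π = 1)
    (v : V) : sLM R π (sLM R π v) = v := by
  simp only [sLM, LinearMap.coe_mk, AddHom.coe_mk, map_sub, map_smul, smul_eq_mul,
    LinearMap.sub_apply, LinearMap.smul_apply, h]
  module

/-- The reflection in `π` as a linear equivalence (junk value `1` if `π` is not normalized). -/
noncomputable def sR (R : BasedRootSystem V) (π : V) : V ≃ₗ[ℝ] V :=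
  if h : R.form π π = 1 then
    LinearEquiv.ofLinear (sLM R π) (sLM R π)
      (by ext v; exact sLM_invol R h v) (by ext v; exact sLM_invol R h v)
  else 1

lemma sR_apply (R : BasedRootSystem V) {π : V} (h : R.form π π = 1) (v : V) :
    sR R π v = v - (2 * R.form v π) • π := by
  simp [sR, h, sLM, LinearEquiv.ofLinear]

lemma sR_sR (R : BasedRootSystem V) {π : V} (h : R.form π π = 1) (v : V) :
    sR R π (sR R π v) = v := by
  rw [sR_apply R h, sR_apply R h]
  simp only [map_sub, map_smul, smul_eq_mul, LinearMap.sub_apply, LinearMap.smul_apply, h]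
  module

lemma sR_mul_self (R : BasedRootSystem V) {π : V} (h : R.form π π = 1) :
    sR R π * sR R π = 1 := by
  ext v; exact sR_sR R h v

lemma sR_inv (R : BasedRootSystem V) {π : V} (h : R.form π π = 1) :
    (sR R π)⁻¹ = sR R π := inv_eq_of_mul_eq_one_right (sR_mul_self R h)

lemma sR_isRefl (R : BasedRootSystem V) {π : V} (h : R.form π π = 1) :
    R.IsRefl π (sR R π) := by
  intro v; rw [sR_apply R h, h]; norm_num

lemma isRefl_eq (R : BasedRootSystem V) {π : V} (h : R.form π π = 1)
    {g : V ≃ₗ[ℝ] V} (hg : R.IsRefl π g) : g = sR R π := by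
  ext v; rw [hg v, sR_apply R h, h]; norm_num

lemma sR_form (R : BasedRootSystem V) {π : V} (h : R.form π π = 1) (u v : V) :
    R.form (sR R π u) (sR R π v) = R.form u v := by
  rw [sR_apply R h, sR_apply R h]
  simp only [map_sub, map_smul, LinearMap.sub_apply, LinearMap.smul_apply, smul_eq_mul, h]
  rw [R.form_symm π v]
  ring

lemma simple_ne_zero (R : BasedRootSystem V) {π : V} (hπ : π ∈ R.simples) : π ≠ 0 := by
  intro h
  have := R.norm_one π hπ
  rw [h] at this
  simp at this

lemma sR_ne_one (R : BasedRootSystem V) {π : V} (hπ : π ∈ R.simples) : sR R π ≠ 1 := by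
  have h := R.norm_one π hπ
  intro he
  have h2 : sR R π π = π := by rw [he]; rfl
  rw [sR_apply R h, h, mul_one] at h2
  have : (2 : ℝ) • π = 0 := by
    have := sub_eq_iff_eq_add.mp h2
    linear_combination (norm := module) -this
  exact simple_ne_zero R hπ (by simpa using this)

end S5

namespace S5

variable {V : Type*} [AddCommGroup V] [Module ℝ V]

/-- `w` is a product of a list of elements of `T`. -/
def IsProd (T : Set (V ≃ₗ[ℝ] V)) (w : V ≃ₗ[ℝ] V) : Prop :=
  ∃ l : List (V ≃ₗ[ℝ] V), (∀ g ∈ l, g ∈ T) ∧ w = l.prod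

/-- Word length of `w` with respect to the alphabet `T`. -/
noncomputable def len (T : Set (V ≃ₗ[ℝ] V)) (w : V ≃ₗ[ℝ] V) : ℕ :=
  sInf { n | ∃ l : List (V ≃ₗ[ℝ] V), l.length = n ∧ (∀ g ∈ l, g ∈ T) ∧ w = l.prod }

lemma len_le {T : Set (V ≃ₗ[ℝ] V)} {w : V ≃ₗ[ℝ] V} {l : List (V ≃ₗ[ℝ] V)}
    (hl : ∀ g ∈ l, g ∈ T) (hw : w = l.prod) : len T w ≤ l.length :=
  Nat.sInf_le ⟨l, rfl, hl, hw⟩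

lemma exists_min_word {T : Set (V ≃ₗ[ℝ] V)} {w : V ≃ₗ[ℝ] V} (h : IsProd T w) :
    ∃ l : List (V ≃ₗ[ℝ] V), l.length = len T w ∧ (∀ g ∈ l, g ∈ T) ∧ w = l.prod := by
  obtain ⟨l, hl, hw⟩ := h
  exact Nat.sInf_mem (⟨l.length, l, rfl, hl, hw⟩ :
    Set.Nonempty {n | ∃ l : List (V ≃ₗ[ℝ] V), l.length = n ∧ (∀ g ∈ l, g ∈ T) ∧ w = l.prod})

lemma IsProd.one {T : Set (V ≃ₗ[ℝ] V)} : IsProd T 1 := ⟨[], by simp, by simp⟩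

lemma IsProd.mul {T : Set (V ≃ₗ[ℝ] V)} {x y : V ≃ₗ[ℝ] V} (hx : IsProd T x)
    (hy : IsProd T y) : IsProd T (x * y) := by
  obtain ⟨lx, hlx, hxe⟩ := hx
  obtain ⟨ly, hly, hye⟩ := hy
  refine ⟨lx ++ ly, ?_, by rw [List.prod_append, hxe, hye]⟩
  intro g hg
  rcases List.mem_append.mp hg with h | h
  exacts [hlx g h, hly g h]

lemma IsProd.single {T : Set (V ≃ₗ[ℝ] V)} {g : V ≃ₗ[ℝ] V} (hg : g ∈ T) : IsProd T g :=
  ⟨[g], by simpa using hg, by simp⟩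

lemma IsProd.inv {T : Set (V ≃ₗ[ℝ] V)} (hT : ∀ g ∈ T, g * g = 1) {x : V ≃ₗ[ℝ] V}
    (hx : IsProd T x) : IsProd T x⁻¹ := by
  obtain ⟨l, hl, he⟩ := hx
  refine ⟨l.reverse, by intro g hg; exact hl g (List.mem_reverse.mp hg), ?_⟩
  rw [he, List.prod_inv_reverse, ← List.map_reverse]
  have : List.map (fun x => x⁻¹) l.reverse = List.map id l.reverse := by
    apply List.map_congr_left
    intro g hg
    exact inv_eq_of_mul_eq_one_right (hT g (hl g (List.mem_reverse.mp hg)))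
  rw [this, List.map_id]

lemma IsProd.mono {T T' : Set (V ≃ₗ[ℝ] V)} (h : T ⊆ T') {x : V ≃ₗ[ℝ] V}
    (hx : IsProd T x) : IsProd T' x := by
  obtain ⟨l, hl, he⟩ := hx
  exact ⟨l, fun g hg => h (hl g hg), he⟩

lemma len_one {T : Set (V ≃ₗ[ℝ] V)} : len T (1 : V ≃ₗ[ℝ] V) = 0 :=
  Nat.le_zero.mp (len_le (l := []) (by simp) (by simp))

lemma eq_one_of_len_zero {T : Set (V ≃ₗ[ℝ] V)} {w : V ≃ₗ[ℝ] V} (h : IsProd T w)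
    (h0 : len T w = 0) : w = 1 := by
  obtain ⟨l, hlen, _, hw⟩ := exists_min_word h
  rw [h0] at hlen
  rw [hw, List.length_eq_zero_iff.mp hlen]
  simp

lemma len_mul_le {T : Set (V ≃ₗ[ℝ] V)} {x y : V ≃ₗ[ℝ] V} (hx : IsProd T x)
    (hy : IsProd T y) : len T (x * y) ≤ len T x + len T y := by
  obtain ⟨lx, hx1, hx2, hx3⟩ := exists_min_word hx
  obtain ⟨ly, hy1, hy2, hy3⟩ := exists_min_word hy
  calc len T (x * y) ≤ (lx ++ ly).length := len_le
        (by intro g hg; rcases List.mem_append.mp hg with h | h; exacts [hx2 g h, hy2 g h])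
        (by rw [List.prod_append, hx3, hy3])
    _ = len T x + len T y := by rw [List.length_append, hx1, hy1]

lemma len_mono {T T' : Set (V ≃ₗ[ℝ] V)} (h : T ⊆ T') {x : V ≃ₗ[ℝ] V}
    (hx : IsProd T x) : len T' x ≤ len T x := by
  obtain ⟨l, h1, h2, h3⟩ := exists_min_word hx
  calc len T' x ≤ l.length := len_le (fun g hg => h (h2 g hg)) h3
    _ = len T x := h1

lemma len_single_le {T : Set (V ≃ₗ[ℝ] V)} {g : V ≃ₗ[ℝ] V} (hg : g ∈ T) : len T g ≤ 1 :=
  len_le (l := [g]) (by simpa using hg) (by simp)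

lemma len_single {T : Set (V ≃ₗ[ℝ] V)} {g : V ≃ₗ[ℝ] V} (hg : g ∈ T) (hne : g ≠ 1) :
    len T g = 1 := by
  have h1 := len_single_le hg
  have : len T g ≠ 0 := fun h0 => hne (eq_one_of_len_zero (IsProd.single hg) h0)
  omega

lemma closure_isProd {T : Set (V ≃ₗ[ℝ] V)} (hT : ∀ g ∈ T, g * g = 1) {w : V ≃ₗ[ℝ] V}
    (hw : w ∈ Subgroup.closure T) : IsProd T w := by
  induction hw using Subgroup.closure_induction with
  | mem g hg => exact IsProd.single hg
  | one => exact IsProd.one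
  | mul x y _ _ hx hy => exact hx.mul hy
  | inv x _ hx => exact hx.inv hT

end S5

namespace S5

variable {V : Type*} [AddCommGroup V] [Module ℝ V]

/-- Alternating word of length `n` whose rightmost letter is `y`. -/
def altL (x y : V ≃ₗ[ℝ] V) : ℕ → List (V ≃ₗ[ℝ] V)
  | 0 => []
  | n+1 => (if n % 2 = 0 then y else x) :: altL x y n

@[simp] lemma altL_length (x y : V ≃ₗ[ℝ] V) (n : ℕ) : (altL x y n).length = n := by
  induction n with
  | zero => rfl
  | succ n ih => simp [altL, ih]

lemma altL_letters (x y : V ≃ₗ[ℝ] V) (n : ℕ) : ∀ g ∈ altL x y n, g = x ∨ g = y := by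
  induction n with
  | zero => simp [altL]
  | succ n ih =>
    intro g hg
    rcases List.mem_cons.mp hg with h | h
    · rcases Nat.even_or_odd n with he | ho
      · right; rw [h]; simp [Nat.even_iff.mp he]
      · left; rw [h]; simp [Nat.odd_iff.mp ho]
    · exact ih g h

lemma altL_concat (x y : V ≃ₗ[ℝ] V) (n : ℕ) :
    altL x y (n + 1) = altL y x n ++ [y] := by
  induction n with
  | zero => simp [altL]
  | succ n ih =>
    show (if (n+1) % 2 = 0 then y else x) :: altL x y (n+1) =
      ((if n % 2 = 0 then x else y) :: altL y x n) ++ [y]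
    rw [ih]
    rcases Nat.even_or_odd n with he | ho
    · have h1 : n % 2 = 0 := Nat.even_iff.mp he
      have h2 : (n+1) % 2 = 1 := by omega
      simp [h1, h2, altL]
    · have h1 : n % 2 = 1 := Nat.odd_iff.mp ho
      have h2 : (n+1) % 2 = 0 := by omega
      simp [h1, h2, altL]

lemma alt_cons {x y g : V ≃ₗ[ℝ] V} (k : ℕ) (hg : g = x ∨ g = y)
    (hne : g ≠ (if k % 2 = 0 then y else x)) :
    g :: altL x y (k+1) = altL x y (k+2) := by
  show g :: altL x y (k+1) = (if (k+1) % 2 = 0 then y else x) :: altL x y (k+1)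
  rcases Nat.even_or_odd k with he | ho
  · have h1 : k % 2 = 0 := Nat.even_iff.mp he
    have h2 : (k+1) % 2 = 1 := by omega
    rw [h1] at hne; simp only [if_pos rfl] at hne
    rcases hg with h | h
    · rw [h2]; simp [h]
    · exact absurd h hne
  · have h1 : k % 2 = 1 := Nat.odd_iff.mp ho
    have h2 : (k+1) % 2 = 0 := by omega
    rw [h1] at hne
    simp only [OfNat.ofNat_ne_zero, if_false, one_ne_zero] at hne
    rcases hg with h | h
    · exact absurd h hne
    · rw [h2]; simp [h]

lemma altL_head (x y : V ≃ₗ[ℝ] V) (k : ℕ) :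
    altL x y (k+1) = (if k % 2 = 0 then y else x) :: altL x y k := rfl

/-- Classification: an alternating list over `{x,y}` is one of the two canonical words. -/
lemma alt_class {x y : V ≃ₗ[ℝ] V} :
    ∀ l : List (V ≃ₗ[ℝ] V), (∀ g ∈ l, g = x ∨ g = y) → l.Chain' (· ≠ ·) →
      l = altL x y l.length ∨ l = altL y x l.length := by
  intro l
  induction l with
  | nil => intro _ _; left; rfl
  | cons g l ih =>
    intro hmem hch
    have hmem' : ∀ h ∈ l, h = x ∨ h = y := fun h hh => hmem h (List.mem_cons_of_mem g hh)
    have hgmem : g = x ∨ g = y := hmem g (List.mem_cons_self)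
    cases l with
    | nil =>
      rcases hgmem with h | h
      · right; rw [h]; simp [altL]
      · left; rw [h]; simp [altL]
    | cons g2 t =>
      have hne : g ≠ g2 := (List.isChain_cons_cons.mp hch).1
      have hch' : (g2 :: t).Chain' (· ≠ ·) := (List.isChain_cons_cons.mp hch).2
      rcases ih hmem' hch' with hl | hl
      · -- g2 :: t = altL x y (t.length + 1)
        left
        have hlen : (g2 :: t).length = t.length + 1 := by simp
        rw [hlen] at hl
        have hg2 : g2 = (if t.length % 2 = 0 then y else x) := by
          have := hl
          rw [altL_head] at this
          exact (List.cons_eq_cons.mp this).1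
        have : g :: (g2 :: t) = altL x y (t.length + 2) := by
          rw [hl]
          exact alt_cons t.length hgmem (by rw [← hg2]; exact hne)
        rw [this]; simp
      · right
        have hlen : (g2 :: t).length = t.length + 1 := by simp
        rw [hlen] at hl
        have hg2 : g2 = (if t.length % 2 = 0 then x else y) := by
          have := hl
          rw [altL_head] at this
          exact (List.cons_eq_cons.mp this).1
        have : g :: (g2 :: t) = altL y x (t.length + 2) := by
          rw [hl]
          exact alt_cons t.length hgmem.symm (by rw [← hg2]; exact hne)
        rw [this]; simp

/-- Surgery: a non-alternating word over two involutions can be shortened by 2. -/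
lemma word_surgery {x y : V ≃ₗ[ℝ] V} (hx : x * x = 1) (hy : y * y = 1) :
    ∀ l : List (V ≃ₗ[ℝ] V), (∀ g ∈ l, g = x ∨ g = y) → ¬ l.Chain' (· ≠ ·) →
      ∃ l' : List (V ≃ₗ[ℝ] V), l'.length + 2 = l.length ∧
        (∀ g ∈ l', g = x ∨ g = y) ∧ l'.prod = l.prod := by
  intro l
  induction l with
  | nil => intro _ hch; exact absurd List.isChain_nil hch
  | cons g l ih =>
    intro hmem hch
    cases l with
    | nil => exact absurd (List.isChain_singleton g) hch
    | cons g2 t =>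
      have hmem' : ∀ h ∈ g2 :: t, h = x ∨ h = y :=
        fun h hh => hmem h (List.mem_cons_of_mem g hh)
      by_cases hgg : g = g2
      · refine ⟨t, by simp, fun h hh => hmem' h (List.mem_cons_of_mem g2 hh), ?_⟩
        have hinv : g * g = 1 := by
          rcases hmem g (List.mem_cons_self) with h | h <;> rw [h]
          exacts [hx, hy]
        rw [List.prod_cons, List.prod_cons, ← hgg, ← mul_assoc, hinv, one_mul]
      · have hch2 : ¬ (g2 :: t).Chain' (· ≠ ·) := by
          intro hc
          exact hch (List.isChain_cons_cons.mpr ⟨hgg, hc⟩)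
        obtain ⟨l', h1, h2, h3⟩ := ih hmem' hch2
        refine ⟨g :: l', by simp at h1 ⊢; omega, ?_, ?_⟩
        · intro h hh
          rcases List.mem_cons.mp hh with h' | h'
          · rw [h']; exact hmem g (List.mem_cons_self)
          · exact h2 h h'
        · rw [List.prod_cons, List.prod_cons, h3]

end S5

namespace S5

noncomputable def Ud (d : ℝ) : ℕ → ℝ
  | 0 => 0
  | 1 => 1
  | (n+2) => 2*d*Ud d (n+1) - Ud d n

@[simp] lemma Ud_zero (d : ℝ) : Ud d 0 = 0 := rfl
@[simp] lemma Ud_one (d : ℝ) : Ud d 1 = 1 := rfl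
lemma Ud_succ2 (d : ℝ) (n : ℕ) : Ud d (n+2) = 2*d*Ud d (n+1) - Ud d n := rfl

lemma Ud_mono {d : ℝ} (hd : 1 ≤ d) : ∀ k, 0 ≤ Ud d k ∧ Ud d k ≤ Ud d (k+1) := by
  intro k
  induction k with
  | zero => norm_num
  | succ k ih =>
    obtain ⟨h1, h2⟩ := ih
    have h3 : 0 ≤ Ud d (k+1) := le_trans h1 h2
    refine ⟨h3, ?_⟩
    rw [Ud_succ2]
    nlinarith

lemma Ud_nonneg_of_ge_one {d : ℝ} (hd : 1 ≤ d) (k : ℕ) : 0 ≤ Ud d k := (Ud_mono hd k).1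

open Real in
lemma Usin (θ : ℝ) : ∀ k : ℕ, Ud (cos θ) k * sin θ = sin (k * θ)
  | 0 => by simp
  | 1 => by simp
  | (k+2) => by
    have h1 := Usin θ k
    have h2 := Usin θ (k+1)
    rw [Ud_succ2]
    have e2 : ((k:ℝ)+2) * θ = ((k+1) * θ) + θ := by ring
    have e0 : (k:ℝ) * θ = ((k+1) * θ) - θ := by ring
    push_cast
    rw [e2, sin_add]
    push_cast at h1 h2
    rw [e0, sin_sub] at h1
    linear_combination 2 * cos θ * h2 - h1

section FiniteCase

variable {m : ℕ} (hm : 2 ≤ m)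

open Real

lemma theta_pos (hm : 2 ≤ m) : 0 < π / m :=
  div_pos pi_pos (by positivity)

lemma theta_le (hm : 2 ≤ m) : π / m ≤ π / 2 := by
  apply div_le_div_of_nonneg_left pi_pos.le (by norm_num)
  exact_mod_cast hm

lemma sin_theta_pos (hm : 2 ≤ m) : 0 < sin (π / m) := by
  apply sin_pos_of_pos_of_lt_pi (theta_pos hm)
  have := theta_le hm
  linarith [pi_pos]

lemma cos_theta_nonneg (hm : 2 ≤ m) : 0 ≤ cos (π / m) :=
  cos_nonneg_of_mem_Icc ⟨by linarith [theta_pos hm, pi_pos], theta_le hm⟩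

lemma cos_theta_sq_lt_one (hm : 2 ≤ m) : cos (π / m) ^ 2 < 1 := by
  have hs := sin_theta_pos hm
  nlinarith [sin_sq_add_cos_sq (π / m)]

lemma m_theta (hm : 2 ≤ m) : (m : ℝ) * (π / m) = π := by
  field_simp

lemma Ud_nonneg_fin (hm : 2 ≤ m) {k : ℕ} (hk : k ≤ m) : 0 ≤ Ud (cos (π / m)) k := by
  have h := Usin (π / m) k
  have hs := sin_theta_pos hm
  have hsin : 0 ≤ sin (k * (π / m)) := by
    apply sin_nonneg_of_nonneg_of_le_pi
    · positivity
    · have hk' : (k:ℝ) ≤ m := by exact_mod_cast hk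
      have ht := theta_pos hm
      calc (k:ℝ) * (π/m) ≤ (m:ℝ) * (π/m) := by nlinarith
        _ = π := m_theta hm
  nlinarith [h]

lemma Ud_2m (hm : 2 ≤ m) : Ud (cos (π / m)) (2 * m) = 0 := by
  have h := Usin (π / m) (2 * m)
  have hs := sin_theta_pos hm
  have e : ((2 * m : ℕ) : ℝ) * (π / m) = 2 * π := by
    push_cast
    field_simp
  rw [e, sin_two_pi] at h
  exact (mul_eq_zero.mp h).resolve_right (ne_of_gt hs)

lemma Ud_2m1 (hm : 2 ≤ m) : Ud (cos (π / m)) (2 * m + 1) = 1 := by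
  have h := Usin (π / m) (2 * m + 1)
  have hs := sin_theta_pos hm
  have e : ((2 * m + 1 : ℕ) : ℝ) * (π / m) = (π / m) + 2 * π := by
    have hm0 : (m : ℝ) ≠ 0 := by positivity
    push_cast
    field_simp
    ring
  rw [e, sin_add_two_pi] at h
  have h' : Ud (cos (π / m)) (2 * m + 1) * sin (π / m) = 1 * sin (π / m) := by rw [h]; ring
  exact mul_right_cancel₀ (ne_of_gt hs) h' 

lemma Ud_2m_sub1 (hm : 2 ≤ m) : Ud (cos (π / m)) (2 * m - 1) = -1 := by
  have h := Usin (π / m) (2 * m - 1)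
  have hs := sin_theta_pos hm
  have e : ((2 * m - 1 : ℕ) : ℝ) * (π / m) = 2 * π - (π / m) := by
    have hm0 : (m : ℝ) ≠ 0 := by positivity
    have h1 : (1:ℕ) ≤ 2 * m := by omega
    push_cast [h1]
    field_simp
  rw [e, sin_two_pi_sub] at h
  have : Ud (cos (π / m)) (2 * m - 1) * sin (π / m) = (-1) * sin (π / m) := by
    rw [h]; ring
  exact mul_right_cancel₀ (ne_of_gt hs) this

end FiniteCase

end S5

namespace S5

open BasedRootSystem

variable {V : Type*} [AddCommGroup V] [Module ℝ V]

@[simp] lemma mul_apply' (e f : V ≃ₗ[ℝ] V) (v : V) : (e * f) v = e (f v) := rfl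
@[simp] lemma one_apply' (v : V) : (1 : V ≃ₗ[ℝ] V) v = v := rfl

lemma sR_apply_self (R : BasedRootSystem V) {p : V} (h : R.form p p = 1) :
    sR R p p = -p := by
  rw [sR_apply R h, h]; module

section Dihedral

variable (R : BasedRootSystem V) {α β : V}

/-- Orbit of `α` under the alternating words ending in `s_β`. -/
lemma orbitA (hα : α ∈ R.simples) (hβ : β ∈ R.simples) : ∀ k : ℕ,
    (altL (sR R α) (sR R β) (2*k)).prod α
        = Ud (-R.form α β) (2*k+1) • α + Ud (-R.form α β) (2*k) • β
    ∧ (altL (sR R α) (sR R β) (2*k+1)).prod α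
        = Ud (-R.form α β) (2*k+1) • α + Ud (-R.form α β) (2*k+2) • β := by
  have hnα := R.norm_one α hα
  have hnβ := R.norm_one β hβ
  have hU : ∀ i j : ℕ, i = j + 2 →
      Ud (-R.form α β) i
        = 2*(-R.form α β)*Ud (-R.form α β) (j+1) - Ud (-R.form α β) j := by
    rintro i j rfl; exact Ud_succ2 _ _
  intro k
  induction k with
  | zero =>
    constructor
    · show (altL (sR R α) (sR R β) 0).prod α = _
      simp [altL]
    · show (altL (sR R α) (sR R β) 1).prod α = _
      rw [show 2*0+1 = 1 from by norm_num, show 2*0+2 = 2 from by norm_num]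
      simp only [altL, Nat.zero_mod, if_true, eq_self_iff_true, List.prod_cons,
        List.prod_nil, mul_one]
      rw [sR_apply R hnβ]
      rw [hU 2 0 (by ring)]
      simp only [Ud_zero, Ud_one, zero_add]
      module
  | succ k ih =>
    obtain ⟨_, ih2⟩ := ih
    rw [show 2*k+2 = 2*k+1+1 from by ring] at ih2
    have step1 : (altL (sR R α) (sR R β) (2*(k+1))).prod α
        = Ud (-R.form α β) (2*(k+1)+1) • α + Ud (-R.form α β) (2*(k+1)) • β := by
      rw [show 2*(k+1)+1 = 2*k+1+1+1 from by ring,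
          show 2*(k+1) = 2*k+1+1 from by ring]
      rw [altL_head, show (2*k+1) % 2 = 1 from by omega]
      simp only [if_neg (by norm_num : ¬(1:ℕ) = 0), List.prod_cons, mul_apply']
      rw [ih2]
      simp only [map_add, map_smul]
      rw [sR_apply_self R hnα, sR_apply R hnα, R.form_symm β α]
      rw [hU (2*k+1+1+1) (2*k+1) (by ring)]
      module
    refine ⟨step1, ?_⟩
    rw [show 2*(k+1)+2 = 2*(k+1)+1+1 from by ring]
    rw [altL_head, show (2*(k+1)) % 2 = 0 from by omega]
    simp only [if_true, eq_self_iff_true, List.prod_cons, mul_apply']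
    rw [step1]
    simp only [map_add, map_smul]
    rw [sR_apply_self R hnβ, sR_apply R hnβ]
    rw [hU (2*(k+1)+1+1) (2*(k+1)) (by ring)]
    module

/-- Orbit of `α` and `β` under powers of the rotation `r = s_α s_β`. -/
lemma orbitPow (hα : α ∈ R.simples) (hβ : β ∈ R.simples) : ∀ j : ℕ,
    ((sR R α * sR R β)^j) α
      = Ud (-R.form α β) (2*j+1) • α + Ud (-R.form α β) (2*j) • β
    ∧ ((sR R α * sR R β)^(j+1)) β
      = -(Ud (-R.form α β) (2*j+2) • α + Ud (-R.form α β) (2*j+1) • β) := by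
  have hnα := R.norm_one α hα
  have hnβ := R.norm_one β hβ
  have hU : ∀ i j : ℕ, i = j + 2 →
      Ud (-R.form α β) i
        = 2*(-R.form α β)*Ud (-R.form α β) (j+1) - Ud (-R.form α β) j := by
    rintro i j rfl; exact Ud_succ2 _ _
  intro j
  induction j with
  | zero =>
    constructor
    · simp
    · rw [pow_one]
      rw [show 2*0+1 = 1 from by norm_num, show 2*0+2 = 2 from by norm_num]
      simp only [mul_apply']
      rw [sR_apply_self R hnβ]
      simp only [map_neg]
      rw [sR_apply R hnα, R.form_symm β α]
      rw [hU 2 0 (by ring)]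
      simp only [Ud_zero, Ud_one, zero_add]
      module
  | succ j ih =>
    obtain ⟨ih1, ih2⟩ := ih
    rw [show 2*j+2 = 2*j+1+1 from by ring] at ih2
    have step1 : ((sR R α * sR R β)^(j+1)) α
        = Ud (-R.form α β) (2*(j+1)+1) • α + Ud (-R.form α β) (2*(j+1)) • β := by
      rw [show 2*(j+1)+1 = 2*j+1+1+1 from by ring,
          show 2*(j+1) = 2*j+1+1 from by ring]
      rw [pow_succ']
      simp only [mul_apply']
      rw [ih1]
      simp only [map_add, map_smul, mul_apply']
      rw [sR_apply R hnβ, sR_apply_self R hnβ]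
      simp only [map_add, map_smul, map_sub, map_neg]
      rw [sR_apply_self R hnα, sR_apply R hnα, R.form_symm β α]
      rw [hU (2*j+1+1+1) (2*j+1) (by ring)]
      rw [hU (2*j+1+1) (2*j) (by ring), show 2*j+1 = 2*j+1 from rfl]
      module
    refine ⟨step1, ?_⟩
    rw [show 2*(j+1)+2 = 2*(j+1)+1+1 from by ring]
    rw [pow_succ']
    simp only [mul_apply']
    rw [show ((sR R α * sR R β)^(j+1)) β = -(Ud (-R.form α β) (2*j+1+1) • α
        + Ud (-R.form α β) (2*j+1) • β) from ih2]
    simp only [map_neg, map_add, map_smul, mul_apply']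
    rw [sR_apply R hnβ, sR_apply_self R hnβ]
    simp only [map_add, map_smul, map_sub, map_neg]
    rw [sR_apply_self R hnα, sR_apply R hnα, R.form_symm β α]
    rw [show 2*(j+1) = 2*j+1+1 from by ring]
    rw [hU (2*j+1+1+1+1) (2*j+1+1) (by ring)]
    rw [hU (2*j+1+1+1) (2*j+1) (by ring)]
    module

end Dihedral

end S5

namespace S5

open BasedRootSystem

variable {V : Type*} [AddCommGroup V] [Module ℝ V]

lemma mul_pow_alt {G : Type*} [Group G] (x y : G) : ∀ n, (x*y)^(n+1) = x * (y*x)^n * y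
  | 0 => by group
  | n+1 => by rw [pow_succ, mul_pow_alt x y n, pow_succ]; group

lemma IsProd.pow {T : Set (V ≃ₗ[ℝ] V)} {x : V ≃ₗ[ℝ] V} (hx : IsProd T x) :
    ∀ n, IsProd T (x^n)
  | 0 => by rw [pow_zero]; exact IsProd.one
  | n+1 => by rw [pow_succ]; exact (hx.pow n).mul hx

lemma relAB {x y : V ≃ₗ[ℝ] V} (hx : x*x = 1) (hy : y*y = 1) :
    ∀ n, (altL x y n).prod * ((altL y x n).prod)⁻¹
      = if n % 2 = 0 then (x*y)^n else (y*x)^n := by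
  have hxi : x⁻¹ = x := inv_eq_of_mul_eq_one_right hx
  have hyi : y⁻¹ = y := inv_eq_of_mul_eq_one_right hy
  intro n
  induction n with
  | zero => simp [altL]
  | succ n ih =>
    rw [altL_head, altL_head]
    simp only [List.prod_cons, mul_inv_rev]
    rcases Nat.even_or_odd n with he | ho
    · have h0 : n % 2 = 0 := Nat.even_iff.mp he
      have h1 : ¬ (n+1) % 2 = 0 := by omega
      rw [if_pos h0] at ih
      rw [if_pos h0, if_pos h0, if_neg h1, hxi]
      calc y * (altL x y n).prod * (((altL y x n).prod)⁻¹ * x)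
          = y * ((altL x y n).prod * ((altL y x n).prod)⁻¹) * x := by group
        _ = y * (x*y)^n * x := by rw [ih]
        _ = (y*x)^(n+1) := (mul_pow_alt y x n).symm
    · have h0' : n % 2 = 1 := Nat.odd_iff.mp ho
      have h0 : ¬ n % 2 = 0 := by omega
      have h1 : (n+1) % 2 = 0 := by omega
      rw [if_neg h0] at ih
      rw [if_neg h0, if_neg h0, if_pos h1, hyi]
      calc x * (altL x y n).prod * (((altL y x n).prod)⁻¹ * y)
          = x * ((altL x y n).prod * ((altL y x n).prod)⁻¹) * y := by group
        _ = x * (y*x)^n * y := by rw [ih]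
        _ = (x*y)^(n+1) := (mul_pow_alt x y n).symm

section Dihedral2

variable (R : BasedRootSystem V) {α β : V}

lemma sR_ne_sR (hα : α ∈ R.simples) (hβ : β ∈ R.simples) (hne : α ≠ β) :
    sR R α ≠ sR R β := by
  classical
  have hnα := R.norm_one α hα
  have hnβ := R.norm_one β hβ
  intro h
  have h2 : sR R α β = sR R β β := by rw [h]
  rw [sR_apply R hnα, sR_apply_self R hnβ] at h2
  set c := R.form β α with hc
  have hbe : β = c • α := by
    have h3 : (2:ℝ) • β = (2*c) • α := by linear_combination (norm := module) h2
    calc β = (2⁻¹ : ℝ) • ((2:ℝ) • β) := by rw [smul_smul]; norm_num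
      _ = (2⁻¹ : ℝ) • ((2*c) • α) := by rw [h3]
      _ = c • α := by rw [smul_smul]; ring_nf
  have hc2 : c * c = 1 := by
    have h4 := R.norm_one β hβ
    rw [hbe] at h4
    simp only [map_smul, LinearMap.smul_apply, smul_eq_mul] at h4
    rw [hnα] at h4
    linarith [h4]
  have hcc : c = 1 ∨ c = -1 := by
    rcases mul_eq_zero.mp (show (c-1)*(c+1) = 0 by nlinarith) with h | h
    · left; linarith
    · right; linarith
  rcases hcc with h | h
  · apply hne
    rw [h, one_smul] at hbe
    exact hbe.symm
  · -- β = -α : contradicts posIndep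
    rw [h] at hbe
    have hsum : ∑ v ∈ ({α, β} : Finset V), (fun _ => (1:ℝ)) v • v = 0 := by
      rw [Finset.sum_pair hne]
      rw [hbe]
      module
    have := R.posIndep {α, β} (by
      intro v hv
      simp only [Finset.coe_insert, Finset.coe_singleton, Set.mem_insert_iff,
        Set.mem_singleton_iff] at hv
      rcases hv with rfl | rfl
      exacts [hα, hβ]) (fun _ => (1:ℝ)) (fun v _ => one_pos) hsum
    have : α ∈ ({α, β} : Finset V) := by simp
    rw [‹({α, β} : Finset V) = ∅›] at this
    simp at this

lemma prod_form_pres_list {T : Set (V ≃ₗ[ℝ] V)}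
    (hT : ∀ g ∈ T, ∃ p ∈ R.simples, g = sR R p) :
    ∀ l : List (V ≃ₗ[ℝ] V), (∀ g ∈ l, g ∈ T) →
      ∀ u v, R.form (l.prod u) (l.prod v) = R.form u v := by
  intro l
  induction l with
  | nil => intro _ u v; simp
  | cons g l ih =>
    intro hl u v
    simp only [List.prod_cons, mul_apply']
    obtain ⟨p, hp, hgp⟩ := hT g (hl g (List.mem_cons_self))
    rw [hgp, sR_form R (R.norm_one p hp)]
    exact ih (fun g hg => hl g (List.mem_cons_of_mem _ hg)) u v

lemma prod_form_pres {T : Set (V ≃ₗ[ℝ] V)}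
    (hT : ∀ g ∈ T, ∃ p ∈ R.simples, g = sR R p) {w : V ≃ₗ[ℝ] V} (hw : IsProd T w) :
    ∀ u v, R.form (w u) (w v) = R.form u v := by
  obtain ⟨l, hl, rfl⟩ := hw
  exact prod_form_pres_list R hT l hl

lemma prod_plane_list (hα : α ∈ R.simples) (hβ : β ∈ R.simples) {T : Set (V ≃ₗ[ℝ] V)}
    (hT : ∀ g ∈ T, g = sR R α ∨ g = sR R β) :
    ∀ l : List (V ≃ₗ[ℝ] V), (∀ g ∈ l, g ∈ T) →
      ∀ v, ∃ x y : ℝ, l.prod v = v + x • α + y • β := by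
  intro l
  induction l with
  | nil => intro _ v; exact ⟨0, 0, by simp⟩
  | cons g l ih =>
    intro hl v
    obtain ⟨x, y, h⟩ := ih (fun g hg => hl g (List.mem_cons_of_mem _ hg)) v
    simp only [List.prod_cons, mul_apply']
    rcases hT g (hl g (List.mem_cons_self)) with hg | hg
    · refine ⟨x - 2 * R.form (l.prod v) α, y, ?_⟩
      rw [hg, sR_apply R (R.norm_one α hα), h]
      module
    · refine ⟨x, y - 2 * R.form (l.prod v) β, ?_⟩
      rw [hg, sR_apply R (R.norm_one β hβ), h]
      module

lemma prod_plane (hα : α ∈ R.simples) (hβ : β ∈ R.simples) {T : Set (V ≃ₗ[ℝ] V)}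
    (hT : ∀ g ∈ T, g = sR R α ∨ g = sR R β) {w : V ≃ₗ[ℝ] V} (hw : IsProd T w) :
    ∀ v, ∃ x y : ℝ, w v = v + x • α + y • β := by
  obtain ⟨l, hl, rfl⟩ := hw
  exact prod_plane_list R hα hβ hT l hl

open Real in
lemma rm_one (hα : α ∈ R.simples) (hβ : β ∈ R.simples) {m : ℕ} (hm : 2 ≤ m)
    (hform : R.form α β = -cos (π/m)) : (sR R α * sR R β)^m = 1 := by
  have hnα := R.norm_one α hα
  have hnβ := R.norm_one β hβ
  have hd : -R.form α β = cos (π/m) := by rw [hform]; ring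
  have h2m : Ud (-R.form α β) (2*m) = 0 := by rw [hd]; exact Ud_2m hm
  have h2m1 : Ud (-R.form α β) (2*m+1) = 1 := by rw [hd]; exact Ud_2m1 hm
  have h2ms : Ud (-R.form α β) (2*m-1) = -1 := by rw [hd]; exact Ud_2m_sub1 hm
  have rα : ((sR R α * sR R β)^m) α = α := by
    have := (orbitPow R hα hβ m).1
    rw [h2m, h2m1] at this
    rw [this]
    module
  have rβ : ((sR R α * sR R β)^m) β = β := by
    have h := (orbitPow R hα hβ (m-1)).2
    rw [show m - 1 + 1 = m from by omega, show 2*(m-1)+2 = 2*m from by omega,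
        show 2*(m-1)+1 = 2*m-1 from by omega] at h
    rw [h, h2m, h2ms]
    module
  have hT' : ∀ g ∈ ({sR R α, sR R β} : Set (V ≃ₗ[ℝ] V)), g = sR R α ∨ g = sR R β := by
    intro g hg
    simpa using hg
  have hT'' : ∀ g ∈ ({sR R α, sR R β} : Set (V ≃ₗ[ℝ] V)), ∃ p ∈ R.simples, g = sR R p := by
    intro g hg
    rcases hT' g hg with rfl | rfl
    exacts [⟨α, hα, rfl⟩, ⟨β, hβ, rfl⟩]
  have hprod : IsProd ({sR R α, sR R β} : Set (V ≃ₗ[ℝ] V)) ((sR R α * sR R β)^m) :=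
    ((IsProd.single (by simp)).mul (IsProd.single (by simp))).pow m
  have hcos2 := cos_theta_sq_lt_one hm
  ext v
  obtain ⟨x, y, hv⟩ := prod_plane R hα hβ hT' hprod v
  have e1 : R.form (((sR R α * sR R β)^m) v) α = R.form v α := by
    have := prod_form_pres R hT'' hprod v α
    rwa [rα] at this
  have e2 : R.form (((sR R α * sR R β)^m) v) β = R.form v β := by
    have := prod_form_pres R hT'' hprod v β
    rwa [rβ] at this
  rw [hv] at e1 e2
  simp only [map_add, map_smul, LinearMap.add_apply, LinearMap.smul_apply, smul_eq_mul] at e1 e2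
  rw [hnα, R.form_symm β α, hform] at e1
  rw [hnβ, hform] at e2
  have ex : x = y * cos (π/m) := by linarith
  have ey : y = x * cos (π/m) := by linarith
  have hxx : x * (1 - cos (π/m)^2) = 0 := by linear_combination ex + cos (π/m) * ey
  have hx0 : x = 0 := by
    rcases mul_eq_zero.mp hxx with h | h
    · exact h
    · nlinarith [hcos2]
  have hy0 : y = 0 := by rw [hx0] at ey; simpa using ey
  rw [hx0, hy0] at hv
  simpa using hv

lemma AwBw_eq {x y : V ≃ₗ[ℝ] V} (hx : x*x = 1) (hy : y*y = 1) {m : ℕ}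
    (hr : (x*y)^m = 1) : (altL x y m).prod = (altL y x m).prod := by
  have h := relAB hx hy m
  have hyx : y*x = (x*y)⁻¹ := by
    rw [mul_inv_rev, inv_eq_of_mul_eq_one_right hx, inv_eq_of_mul_eq_one_right hy]
  have hyxm : (y*x)^m = 1 := by rw [hyx, inv_pow, hr, inv_one]
  have h1 : (altL x y m).prod * ((altL y x m).prod)⁻¹ = 1 := by
    rw [h]
    split
    · exact hr
    · exact hyxm
  exact mul_inv_eq_one.mp h1

lemma len_altL_le {x y : V ≃ₗ[ℝ] V} (hx : x ∈ ({x, y} : Set (V ≃ₗ[ℝ] V)) := by simp)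
    (n : ℕ) : len ({x, y} : Set (V ≃ₗ[ℝ] V)) ((altL x y n).prod) ≤ n := by
  have := len_le (T := ({x, y} : Set (V ≃ₗ[ℝ] V))) (l := altL x y n)
    (by intro g hg; rcases altL_letters x y n g hg with rfl | rfl <;> simp) rfl
  simpa using this

lemma len_altL_le' {x y : V ≃ₗ[ℝ] V} (n : ℕ) :
    len ({x, y} : Set (V ≃ₗ[ℝ] V)) ((altL y x n).prod) ≤ n := by
  have := len_le (T := ({x, y} : Set (V ≃ₗ[ℝ] V))) (l := altL y x n)
    (by intro g hg; rcases altL_letters y x n g hg with rfl | rfl <;> simp) rfl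
  simpa using this

lemma isProd_altL {x y : V ≃ₗ[ℝ] V} (n : ℕ) :
    IsProd ({x, y} : Set (V ≃ₗ[ℝ] V)) ((altL x y n).prod) :=
  ⟨altL x y n, by intro g hg; rcases altL_letters x y n g hg with rfl | rfl <;> simp, rfl⟩

lemma isProd_altL' {x y : V ≃ₗ[ℝ] V} (n : ℕ) :
    IsProd ({x, y} : Set (V ≃ₗ[ℝ] V)) ((altL y x n).prod) :=
  ⟨altL y x n, by intro g hg; rcases altL_letters y x n g hg with rfl | rfl <;> simp, rfl⟩

lemma awBound {x y : V ≃ₗ[ℝ] V} (hx : x*x = 1) (hy : y*y = 1) {m : ℕ} (hm : 1 ≤ m)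
    (hr : (x*y)^m = 1) :
    ∀ k, len ({x, y} : Set (V ≃ₗ[ℝ] V)) ((altL x y (m+1+k)).prod) ≤ m-1+k := by
  have base : (altL x y (m+1)).prod = (altL y x (m-1)).prod := by
    rw [altL_concat, List.prod_append]
    rw [← AwBw_eq hx hy hr]
    conv_lhs => rw [show m = (m-1)+1 from by omega, altL_concat]
    rw [List.prod_append]
    simp only [List.prod_cons, List.prod_nil, mul_one]
    rw [mul_assoc, hy, mul_one]
  intro k
  induction k with
  | zero =>
    rw [show m+1+0 = m+1 from rfl, base]
    simpa using len_altL_le' (x := x) (y := y) (m-1)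
  | succ k ih =>
    rw [show m+1+(k+1) = (m+1+k)+1 from by ring, altL_head]
    rw [List.prod_cons]
    have h1 : len ({x, y} : Set (V ≃ₗ[ℝ] V))
        ((if (m+1+k) % 2 = 0 then y else x) * (altL x y (m+1+k)).prod)
        ≤ 1 + (m-1+k) := by
      apply le_trans (len_mul_le (IsProd.single (by split <;> simp)) (isProd_altL _))
      have h2 : len ({x, y} : Set (V ≃ₗ[ℝ] V)) (if (m+1+k) % 2 = 0 then y else x) ≤ 1 :=
        len_single_le (by split <;> simp)
      omega
    apply le_trans h1
    omega

end Dihedral2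

end S5

namespace S5

open BasedRootSystem

variable {V : Type*} [AddCommGroup V] [Module ℝ V]

lemma dihedral (R : BasedRootSystem V) {α β : V} (hα : α ∈ R.simples)
    (hβ : β ∈ R.simples) (hne : α ≠ β) (u : V ≃ₗ[ℝ] V)
    (hu : IsProd ({sR R α, sR R β} : Set (V ≃ₗ[ℝ] V)) u)
    (hle : len ({sR R α, sR R β} : Set (V ≃ₗ[ℝ] V)) u
      ≤ len ({sR R α, sR R β} : Set (V ≃ₗ[ℝ] V)) (u * sR R α)) :
    ∃ p q : ℝ, 0 ≤ p ∧ 0 ≤ q ∧ u α = p • α + q • β := by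
  have hnα := R.norm_one α hα
  have hnβ := R.norm_one β hβ
  have hx : sR R α * sR R α = 1 := sR_mul_self R hnα
  have hy : sR R β * sR R β = 1 := sR_mul_self R hnβ
  have hxy : sR R α ≠ sR R β := sR_ne_sR R hα hβ hne
  set T' : Set (V ≃ₗ[ℝ] V) := {sR R α, sR R β} with hT'def
  obtain ⟨l, hlen, hlet, hprod⟩ := exists_min_word hu
  have hlet' : ∀ g ∈ l, g = sR R α ∨ g = sR R β := by
    intro g hg
    have := hlet g hg
    simpa [hT'def] using this
  have hchain : l.Chain' (· ≠ ·) := by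
    by_contra hnc
    obtain ⟨l', h1, h2, h3⟩ := word_surgery hx hy l hlet' hnc
    have hle2 : len T' u ≤ l'.length :=
      len_le (by intro g hg; rcases h2 g hg with rfl | rfl <;> simp [hT'def])
        (hprod.trans h3.symm)
    omega
  -- the case u = 1
  by_cases hn0 : l.length = 0
  · refine ⟨1, 0, by norm_num, by norm_num, ?_⟩
    rw [hprod, List.length_eq_zero_iff.mp hn0]
    simp
  rcases alt_class l hlet' hchain with hl | hl
  · -- good case : word ends with s_β
    have huA : u = (altL (sR R α) (sR R β) l.length).prod := by rw [hprod, ← hl]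
    have hulen : l.length = len T' u := hlen
    rcases R.pairing α hα β hβ hne with ⟨m, hm, hform⟩ | hinf
    · -- finite order case
      have hd : -R.form α β = Real.cos (Real.pi/m) := by rw [hform]; ring
      have hr := rm_one R hα hβ hm hform
      have hnm : l.length + 1 ≤ m := by
        by_contra hcon
        rcases lt_or_ge l.length (m+1) with h1 | h1
        · -- l.length = m
          have hnm' : l.length = m := by omega
          have e1 : u = (altL (sR R β) (sR R α) m).prod := by
            rw [huA, hnm']
            exact AwBw_eq hx hy hr
          have e2 : altL (sR R β) (sR R α) m = altL (sR R α) (sR R β) (m-1) ++ [sR R α] := by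
            conv_lhs => rw [show m = (m-1)+1 from by omega]
            exact altL_concat _ _ _
          have e3 : u * sR R α = (altL (sR R α) (sR R β) (m-1)).prod := by
            rw [e1, e2, List.prod_append]
            simp only [List.prod_cons, List.prod_nil, mul_one]
            rw [mul_assoc, hx, mul_one]
          have hle3 : len T' (u * sR R α) ≤ m - 1 := by
            rw [e3]
            simpa using len_altL_le (x := sR R α) (y := sR R β) (by simp [hT'def]) (m-1)
          omega
        · -- l.length ≥ m + 1
          obtain ⟨k, hk⟩ : ∃ k, l.length = m + 1 + k := ⟨l.length - (m+1), by omega⟩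
          have := awBound hx hy (by omega : 1 ≤ m) hr k
          rw [← hk] at this
          rw [← huA] at this
          rw [← hT'def] at this
          omega
      -- coefficients are nonnegative
      rcases Nat.even_or_odd l.length with he | ho
      · obtain ⟨k, hk⟩ := he
        have hk2 : l.length = 2*k := by omega
        have horb := (orbitA R hα hβ k).1
        rw [hk2] at huA
        rw [← huA] at horb
        refine ⟨Ud (-R.form α β) (2*k+1), Ud (-R.form α β) (2*k), ?_, ?_, horb⟩
        · rw [hd]; exact Ud_nonneg_fin hm (by omega)
        · rw [hd]; exact Ud_nonneg_fin hm (by omega)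
      · obtain ⟨k, hk⟩ := ho
        have hk2 : l.length = 2*k+1 := by omega
        have horb := (orbitA R hα hβ k).2
        rw [hk2] at huA
        rw [← huA] at horb
        refine ⟨Ud (-R.form α β) (2*k+1), Ud (-R.form α β) (2*k+2), ?_, ?_, horb⟩
        · rw [hd]; exact Ud_nonneg_fin hm (by omega)
        · rw [hd]; exact Ud_nonneg_fin hm (by omega)
    · -- infinite order case
      have hd1 : (1:ℝ) ≤ -R.form α β := by linarith
      rcases Nat.even_or_odd l.length with he | ho
      · obtain ⟨k, hk⟩ := he
        have hk2 : l.length = 2*k := by omega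
        have horb := (orbitA R hα hβ k).1
        rw [hk2] at huA
        rw [← huA] at horb
        exact ⟨_, _, Ud_nonneg_of_ge_one hd1 _, Ud_nonneg_of_ge_one hd1 _, horb⟩
      · obtain ⟨k, hk⟩ := ho
        have hk2 : l.length = 2*k+1 := by omega
        have horb := (orbitA R hα hβ k).2
        rw [hk2] at huA
        rw [← huA] at horb
        exact ⟨_, _, Ud_nonneg_of_ge_one hd1 _, Ud_nonneg_of_ge_one hd1 _, horb⟩
  · -- bad case : word ends with s_α, contradiction
    exfalso
    have hulen : l.length = len T' u := hlen
    have e2 : altL (sR R β) (sR R α) l.length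
        = altL (sR R α) (sR R β) (l.length - 1) ++ [sR R α] := by
      conv_lhs => rw [show l.length = (l.length - 1)+1 from by omega]
      exact altL_concat _ _ _
    have e3 : u * sR R α = (altL (sR R α) (sR R β) (l.length - 1)).prod := by
      conv_lhs => rw [hprod, hl, e2]
      rw [List.prod_append]
      simp only [List.prod_cons, List.prod_nil, mul_one]
      rw [mul_assoc, hx, mul_one]
    have hle3 : len T' (u * sR R α) ≤ l.length - 1 := by
      rw [e3]
      simpa using len_altL_le (x := sR R α) (y := sR R β) (by simp [hT'def]) (l.length - 1)
    omega

end S5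

namespace S5

open BasedRootSystem

variable {V : Type*} [AddCommGroup V] [Module ℝ V]

lemma nnCone_of_mem {Γ : Set V} {x : V} (hx : x ∈ Γ) : x ∈ nnCone Γ := by
  refine ⟨{x}, fun _ => 1, by simpa using hx, by norm_num, by simp⟩

lemma nnCone_smul {Γ : Set V} {t : ℝ} (ht : 0 ≤ t) {v : V} (hv : v ∈ nnCone Γ) :
    t • v ∈ nnCone Γ := by
  obtain ⟨s, c, hs, hc, hsum⟩ := hv
  refine ⟨s, fun x => t * c x, hs, fun x hx => mul_nonneg ht (hc x hx), ?_⟩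
  rw [hsum, Finset.smul_sum]
  apply Finset.sum_congr rfl
  intro x _
  rw [smul_smul]

lemma nnCone_add {Γ : Set V} {v w : V} (hv : v ∈ nnCone Γ) (hw : w ∈ nnCone Γ) :
    v + w ∈ nnCone Γ := by
  classical
  obtain ⟨s₁, c₁, hs₁, hc₁, hsum₁⟩ := hv
  obtain ⟨s₂, c₂, hs₂, hc₂, hsum₂⟩ := hw
  refine ⟨s₁ ∪ s₂, fun x => (if x ∈ s₁ then c₁ x else 0) + (if x ∈ s₂ then c₂ x else 0),
    ?_, ?_, ?_⟩
  · intro x hx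
    rcases Finset.mem_union.mp (by exact_mod_cast hx) with h | h
    exacts [hs₁ h, hs₂ h]
  · intro x _
    apply add_nonneg
    · split
      · exact hc₁ x ‹_›
      · exact le_refl 0
    · split
      · exact hc₂ x ‹_›
      · exact le_refl 0
  · rw [hsum₁, hsum₂]
    have e : ∑ x ∈ s₁ ∪ s₂, ((if x ∈ s₁ then c₁ x else 0) + (if x ∈ s₂ then c₂ x else 0)) • x
        = (∑ x ∈ s₁ ∪ s₂, (if x ∈ s₁ then c₁ x else 0) • x)
          + (∑ x ∈ s₁ ∪ s₂, (if x ∈ s₂ then c₂ x else 0) • x) := by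
      rw [← Finset.sum_add_distrib]
      apply Finset.sum_congr rfl
      intro x _
      rw [add_smul]
    rw [e]
    congr 1
    · calc ∑ x ∈ s₁, c₁ x • x
          = ∑ x ∈ (s₁ ∪ s₂) ∩ s₁, c₁ x • x := by rw [Finset.union_inter_cancel_left]
        _ = ∑ x ∈ s₁ ∪ s₂, (if x ∈ s₁ then c₁ x • x else 0) := (Finset.sum_ite_mem _ _ _).symm
        _ = ∑ x ∈ s₁ ∪ s₂, (if x ∈ s₁ then c₁ x else 0) • x := by
            apply Finset.sum_congr rfl
            intro x _
            rw [ite_smul, zero_smul]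
    · calc ∑ x ∈ s₂, c₂ x • x
          = ∑ x ∈ (s₁ ∪ s₂) ∩ s₂, c₂ x • x := by rw [Finset.union_inter_cancel_right]
        _ = ∑ x ∈ s₁ ∪ s₂, (if x ∈ s₂ then c₂ x • x else 0) := (Finset.sum_ite_mem _ _ _).symm
        _ = ∑ x ∈ s₁ ∪ s₂, (if x ∈ s₂ then c₂ x else 0) • x := by
            apply Finset.sum_congr rfl
            intro x _
            rw [ite_smul, zero_smul]

/-- The set of simple reflections. -/
def SS (R : BasedRootSystem V) : Set (V ≃ₗ[ℝ] V) := {g | ∃ p ∈ R.simples, R.IsRefl p g}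

lemma sR_mem_SS (R : BasedRootSystem V) {p : V} (hp : p ∈ R.simples) : sR R p ∈ SS R :=
  ⟨p, hp, sR_isRefl R (R.norm_one p hp)⟩

lemma SS_invol (R : BasedRootSystem V) : ∀ g ∈ SS R, g * g = 1 := by
  rintro g ⟨p, hp, hrefl⟩
  rw [isRefl_eq R (R.norm_one p hp) hrefl]
  exact sR_mul_self R (R.norm_one p hp)

/-- KEY LEMMA (Humphreys 5.4): if `len (w s_γ) ≥ len w` then `w γ` is a nonnegative
combination of simple roots. -/
theorem key (R : BasedRootSystem V) : ∀ n : ℕ, ∀ w : V ≃ₗ[ℝ] V, IsProd (SS R) w →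
    len (SS R) w = n → ∀ γ, γ ∈ R.simples → n ≤ len (SS R) (w * sR R γ) →
    w γ ∈ nnCone R.simples := by
  intro n
  induction n using Nat.strong_induction_on with
  | _ n IH =>
    intro w hw hlw γ hγ hlen
    rcases Nat.eq_zero_or_pos n with h0 | hpos
    · have hw1 : w = 1 := eq_one_of_len_zero hw (by omega)
      rw [hw1, one_apply']
      exact nnCone_of_mem hγ
    · obtain ⟨l, hlenl, hletl, hprodl⟩ := exists_min_word hw
      rw [hlw] at hlenl
      have hlne : l ≠ [] := by
        intro h
        rw [h] at hlenl
        simp at hlenl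
        omega
      obtain ⟨β, hβ, hrefl⟩ := hletl _ (List.getLast_mem hlne)
      have hnβ := R.norm_one β hβ
      have hg : l.getLast hlne = sR R β := isRefl_eq R hnβ hrefl
      have hsplit : l.dropLast ++ [l.getLast hlne] = l := List.dropLast_append_getLast hlne
      have hwg : w * sR R β = l.dropLast.prod := by
        rw [hprodl]
        conv_lhs => rw [← hsplit]
        rw [List.prod_append]
        simp only [List.prod_cons, List.prod_nil, mul_one]
        rw [hg, mul_assoc, sR_mul_self R hnβ, mul_one]
      have hdrop_letters : ∀ g ∈ l.dropLast, g ∈ SS R :=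
        fun g hg' => hletl g (List.dropLast_subset l hg')
      have hlen_wg_le : len (SS R) (w * sR R β) ≤ n - 1 := by
        rw [hwg]
        have := len_le hdrop_letters rfl
        rw [List.length_dropLast, hlenl] at this
        exact this
      have hβγ : γ ≠ β := by
        intro h
        rw [← h] at hlen_wg_le
        omega
      -- exact length of w s_β
      have hwprod : IsProd (SS R) (w * sR R β) :=
        hw.mul (IsProd.single (sR_mem_SS R hβ))
      have hlen_wg : len (SS R) (w * sR R β) + 1 = n := by
        have h1 : w = (w * sR R β) * sR R β := by
          rw [mul_assoc, sR_mul_self R hnβ, mul_one]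
        have h2 : len (SS R) w ≤ len (SS R) (w * sR R β) + len (SS R) (sR R β) := by
          conv_lhs => rw [h1]
          exact len_mul_le hwprod (IsProd.single (sR_mem_SS R hβ))
        have h3 := len_single_le (sR_mem_SS R hβ)
        omega
      set T2 : Set (V ≃ₗ[ℝ] V) := {sR R γ, sR R β} with hT2def
      have hT2S : T2 ⊆ SS R := by
        intro t ht
        rcases ht with rfl | ht
        · exact sR_mem_SS R hγ
        · rw [Set.mem_singleton_iff] at ht
          rw [ht]
          exact sR_mem_SS R hβ
      have hT2inv : ∀ t ∈ T2, t * t = 1 := fun t ht => SS_invol R t (hT2S ht)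
      set D : Set ℕ :=
        {j | ∃ u, IsProd T2 u ∧ len T2 u = j ∧ len (SS R) (w * u⁻¹) + j = n} with hDdef
      have hD1 : 1 ∈ D := by
        refine ⟨sR R β, IsProd.single (by simp [hT2def]), ?_, ?_⟩
        · exact len_single (by simp [hT2def]) (sR_ne_one R hβ)
        · rw [sR_inv R hnβ]
          exact hlen_wg
      have hDbdd : BddAbove D := by
        refine ⟨n, fun j hj => ?_⟩
        obtain ⟨u, _, _, hj3⟩ := hj
        omega
      have hjm : sSup D ∈ D := Nat.sSup_mem ⟨1, hD1⟩ hDbdd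
      set jm := sSup D with hjmdef
      obtain ⟨u, huT, hulen, husum⟩ := hjm
      have hjm1 : 1 ≤ jm := le_csSup hDbdd hD1
      have huinv : IsProd T2 u⁻¹ := huT.inv hT2inv
      set v := w * u⁻¹ with hvdef
      have hvS : IsProd (SS R) v := hw.mul (huinv.mono hT2S)
      -- step claim
      have step : ∀ t ∈ T2, len (SS R) v ≤ len (SS R) (v * t) := by
        intro t ht
        by_contra hcon
        push_neg at hcon
        have htinv : t * t = 1 := hT2inv t ht
        have htS : t ∈ SS R := hT2S ht
        have hvtS : IsProd (SS R) (v * t) := hvS.mul (IsProd.single htS)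
        have h1 : len (SS R) v ≤ len (SS R) (v*t) + 1 := by
          have hvv : v = (v * t) * t := by rw [mul_assoc, htinv, mul_one]
          have h2 : len (SS R) v ≤ len (SS R) (v*t) + len (SS R) t := by
            conv_lhs => rw [hvv]
            exact len_mul_le hvtS (IsProd.single htS)
          have h3 := len_single_le htS
          omega
        have hu' : IsProd T2 (t * u) := (IsProd.single ht).mul huT
        have hu'le : len T2 (t*u) ≤ jm + 1 := by
          have h4 := len_mul_le (IsProd.single ht) huT
          have h5 := len_single_le ht
          omega
        have hw_eq : w * (t*u)⁻¹ = v * t := by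
          rw [mul_inv_rev, inv_eq_of_mul_eq_one_right htinv, ← mul_assoc]
        rcases le_or_gt (len T2 (t*u)) jm with hca | hca
        · have hww : w = (v*t) * (t*u) := by
            rw [hvdef]
            calc w = w * u⁻¹ * u := by rw [mul_assoc, inv_mul_cancel, mul_one]
              _ = w * u⁻¹ * ((t*t) * u) := by rw [htinv, one_mul]
              _ = w * u⁻¹ * t * (t * u) := by group
          have h3 : len (SS R) w ≤ len (SS R) (v*t) + len (SS R) (t*u) := by
            conv_lhs => rw [hww]
            exact len_mul_le hvtS (hu'.mono hT2S)
          have h4 : len (SS R) (t*u) ≤ len T2 (t*u) := len_mono hT2S hu'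
          omega
        · have hca' : len T2 (t*u) = jm + 1 := by omega
          have hmem : jm + 1 ∈ D := by
            refine ⟨t*u, hu', hca', ?_⟩
            rw [hw_eq]
            omega
          have := le_csSup hDbdd hmem
          omega
      -- apply induction hypothesis to v
      have hvlt : len (SS R) v < n := by omega
      have hvγ : v γ ∈ nnCone R.simples := by
        apply IH (len (SS R) v) hvlt v hvS rfl γ hγ
        exact step (sR R γ) (by simp [hT2def])
      have hvβ : v β ∈ nnCone R.simples := by
        apply IH (len (SS R) v) hvlt v hvS rfl β hβ
        exact step (sR R β) (by simp [hT2def])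
      -- dihedral hypothesis
      have hdih : len T2 u ≤ len T2 (u * sR R γ) := by
        have h1 : w * sR R γ = v * (u * sR R γ) := by
          rw [hvdef]
          calc w * sR R γ = w * u⁻¹ * (u * sR R γ) := by group
            _ = _ := rfl
        have huγ : IsProd T2 (u * sR R γ) := huT.mul (IsProd.single (by simp [hT2def]))
        have h2 : len (SS R) (w * sR R γ) ≤ len (SS R) v + len T2 (u * sR R γ) := by
          conv_lhs => rw [h1]
          have h3 := len_mul_le hvS (huγ.mono hT2S)
          have h4 := len_mono hT2S huγ
          omega
        omega
      obtain ⟨p, q, hp, hq, hpq⟩ := dihedral R hγ hβ hβγ u huT hdih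
      have hwv : w = v * u := by
        rw [hvdef, mul_assoc, inv_mul_cancel, mul_one]
      have hwγ : w γ = p • v γ + q • v β := by
        conv_lhs => rw [hwv]
        rw [mul_apply', hpq, map_add, map_smul, map_smul]
      rw [hwγ]
      exact nnCone_add (nnCone_smul hp hvγ) (nnCone_smul hq hvβ)

end S5

namespace S5

open BasedRootSystem

variable {V : Type*} [AddCommGroup V] [Module ℝ V]

lemma neg_simple_not_in_cone (R : BasedRootSystem V) {β : V} (hβ : β ∈ R.simples)
    (h : -β ∈ nnCone R.simples) : False := by
  classical
  obtain ⟨s, c, hs, hc, hsum⟩ := h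
  set c' : V → ℝ := fun x => (if x = β then 1 else 0) + (if x ∈ s then c x else 0) with hc'def
  have hc'nonneg : ∀ x, 0 ≤ c' x := by
    intro x
    apply add_nonneg
    · split <;> norm_num
    · split
      · exact hc x ‹_›
      · exact le_refl 0
  have hsum' : ∑ x ∈ insert β s, c' x • x = 0 := by
    have e : ∀ x ∈ insert β s, c' x • x
        = (if x = β then x else 0) + (if x ∈ s then c x • x else 0) := by
      intro x _
      rw [hc'def]
      simp only [add_smul, ite_smul, zero_smul, one_smul]
    rw [Finset.sum_congr rfl e, Finset.sum_add_distrib]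
    have e1 : ∑ x ∈ insert β s, (if x = β then x else 0) = β := by
      rw [Finset.sum_ite_eq' (insert β s) β (fun x => x)]
      simp
    have e2 : ∑ x ∈ insert β s, (if x ∈ s then c x • x else 0) = ∑ x ∈ s, c x • x := by
      rw [Finset.sum_ite_mem]
      congr 1
      exact Finset.inter_eq_right.mpr (Finset.subset_insert β s)
    rw [e1, e2, ← hsum]
    simp
  set s'' := (insert β s).filter (fun x => 0 < c' x) with hs''def
  have hsum'' : ∑ x ∈ s'', c' x • x = 0 := by
    rw [hs''def]
    rw [Finset.sum_filter_of_ne]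
    · exact hsum'
    · intro x _ hxne
      rcases lt_or_eq_of_le (hc'nonneg x) with h | h
      · exact h
      · exfalso; apply hxne; rw [← h, zero_smul]
  have hempty := R.posIndep s'' (by
      intro x hx
      have hx' : x ∈ insert β s := Finset.mem_of_mem_filter x (by exact_mod_cast hx)
      rcases Finset.mem_insert.mp hx' with rfl | hxs
      · exact hβ
      · exact hs hxs) c' (fun x hx => (Finset.mem_filter.mp hx).2) hsum''
  have hβ'' : β ∈ s'' := by
    rw [hs''def, Finset.mem_filter]
    refine ⟨Finset.mem_insert_self β s, ?_⟩
    show (0:ℝ) < (if β = β then 1 else 0) + (if β ∈ s then c β else 0)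
    simp only [eq_self_iff_true, if_true]
    have : (0:ℝ) ≤ if β ∈ s then c β else 0 := by
      split
      · exact hc β ‹_›
      · exact le_refl 0
    linarith
  rw [hempty] at hβ''
  simp at hβ''

/-- FAITHFULNESS on the simple roots: an element of `W` fixing every simple root is `1`. -/
theorem fix_simples_eq_one (R : BasedRootSystem V) {w : V ≃ₗ[ℝ] V} (hw : w ∈ R.W)
    (hfix : ∀ p ∈ R.simples, w p = p) : w = 1 := by
  have hword : IsProd (SS R) w := closure_isProd (SS_invol R) hw
  by_contra hne1
  have hn0 : len (SS R) w ≠ 0 := fun h => hne1 (eq_one_of_len_zero hword h)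
  obtain ⟨l, hlenl, hletl, hprodl⟩ := exists_min_word hword
  have hlne : l ≠ [] := by
    intro h
    rw [h] at hlenl
    simp at hlenl
    omega
  obtain ⟨β, hβ, hrefl⟩ := hletl _ (List.getLast_mem hlne)
  have hnβ := R.norm_one β hβ
  have hg : l.getLast hlne = sR R β := isRefl_eq R hnβ hrefl
  have hsplit : l.dropLast ++ [l.getLast hlne] = l := List.dropLast_append_getLast hlne
  have hwg : w * sR R β = l.dropLast.prod := by
    rw [hprodl]
    conv_lhs => rw [← hsplit]
    rw [List.prod_append]
    simp only [List.prod_cons, List.prod_nil, mul_one]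
    rw [hg, mul_assoc, sR_mul_self R hnβ, mul_one]
  have hdrop_letters : ∀ g ∈ l.dropLast, g ∈ SS R :=
    fun g hg' => hletl g (List.dropLast_subset l hg')
  have hlen_wg_le : len (SS R) (w * sR R β) ≤ len (SS R) w - 1 := by
    rw [hwg]
    have := len_le hdrop_letters rfl
    rw [List.length_dropLast, hlenl] at this
    omega
  have hvS : IsProd (SS R) (w * sR R β) := hword.mul (IsProd.single (sR_mem_SS R hβ))
  have hback : (w * sR R β) * sR R β = w := by
    rw [mul_assoc, sR_mul_self R hnβ, mul_one]
  have hcond : len (SS R) (w * sR R β) ≤ len (SS R) ((w * sR R β) * sR R β) := by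
    rw [hback]
    omega
  have hvβ : (w * sR R β) β ∈ nnCone R.simples :=
    key R (len (SS R) (w * sR R β)) (w * sR R β) hvS rfl β hβ hcond
  have hwβ : (w * sR R β) β = -(w β) := by
    rw [mul_apply', sR_apply_self R hnβ, map_neg]
  rw [hwβ, hfix β hβ] at hvβ
  exact neg_simple_not_in_cone R hβ hvβ

end S5

namespace S5

open BasedRootSystem

variable {V : Type*} [AddCommGroup V] [Module ℝ V]

lemma prod_span_list (R : BasedRootSystem V) :
    ∀ l : List (V ≃ₗ[ℝ] V), (∀ g ∈ l, g ∈ SS R) →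
      ∀ x ∈ Submodule.span ℝ R.simples, l.prod x ∈ Submodule.span ℝ R.simples := by
  intro l
  induction l with
  | nil => intro _ x hx; simpa using hx
  | cons g l ih =>
    intro hl x hx
    simp only [List.prod_cons, mul_apply']
    have h1 := ih (fun g hg => hl g (List.mem_cons_of_mem _ hg)) x hx
    obtain ⟨p, hp, hrefl⟩ := hl g (List.mem_cons_self)
    rw [isRefl_eq R (R.norm_one p hp) hrefl, sR_apply R (R.norm_one p hp)]
    exact Submodule.sub_mem _ h1 (Submodule.smul_mem _ _ (Submodule.subset_span hp))

lemma roots_sub_span (R : BasedRootSystem V) :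
    R.roots ⊆ ↑(Submodule.span ℝ R.simples) := by
  rintro x ⟨w, hwW, p, hp, rfl⟩
  obtain ⟨l, hl, hprod⟩ := closure_isProd (SS_invol R) hwW
  rw [hprod]
  exact prod_span_list R l hl p (Submodule.subset_span hp)

end S5


open S5
open BasedRootSystem

/-- for irreducible `(W,S)` and a root `α` with stabilizer `Z`:
the span of the orbit `Wα` is the span of `Φ`; `W` acts faithfully on `Wα`;
the intersection of all `W`-conjugates of `Z` is trivial; and if `Wα` is finite
then `W` is finite. -/
theorem statement5 {V : Type*} [AddCommGroup V] [Module ℝ V]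
    (R : BasedRootSystem V) (hirr : R.Irred)
    (α : V) (hα : α ∈ R.roots) :
    Submodule.span ℝ { x | ∃ w ∈ R.W, x = w α } = Submodule.span ℝ R.roots ∧
    (∀ w ∈ R.W, (∀ x ∈ { x | ∃ u ∈ R.W, x = u α }, w x = x) → w = 1) ∧
    (∀ g : V ≃ₗ[ℝ] V,
      (∀ w ∈ R.W, w⁻¹ * g * w ∈ R.W ∧ (w⁻¹ * g * w) α = α) → g = 1) ∧
    ({ x | ∃ w ∈ R.W, x = w α }.Finite → (R.W : Set (V ≃ₗ[ℝ] V)).Finite) := by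
  classical
  obtain ⟨w₀, hw₀, p₀, hp₀, hαw⟩ := hα
  set O : Set V := { x | ∃ w ∈ R.W, x = w α } with hOdef
  have hαO : α ∈ O := ⟨1, one_mem _, (one_apply' α).symm⟩
  have hOO : ∀ w ∈ R.W, ∀ x ∈ O, w x ∈ O := by
    rintro w hwW x ⟨u, huW, rfl⟩
    exact ⟨w * u, mul_mem hwW huW, rfl⟩
  set M := Submodule.span ℝ O with hMdef
  have hMinv : ∀ w ∈ R.W, ∀ x, x ∈ M → w x ∈ M := by
    intro w hwW x hx
    have himg : Submodule.map (↑w : V →ₗ[ℝ] V) M ≤ M := by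
      rw [hMdef, Submodule.map_span]
      apply Submodule.span_le.mpr
      rintro y ⟨z, hz, rfl⟩
      exact Submodule.subset_span (hOO w hwW z hz)
    exact himg ⟨x, hx, rfl⟩
  have hp₀M : p₀ ∈ M := by
    have hα' : α ∈ M := Submodule.subset_span hαO
    have h2 : w₀⁻¹ α ∈ M := hMinv w₀⁻¹ (inv_mem hw₀) α hα'
    have h3 : w₀⁻¹ α = p₀ := by
      rw [hαw, ← mul_apply', inv_mul_cancel, one_apply']
    rwa [h3] at h2
  have hPiM : R.simples ⊆ ↑M := by
    intro p hp
    by_contra hpM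
    have hAB : {q | q ∈ R.simples ∧ q ∈ M} ∪ {q | q ∈ R.simples ∧ q ∉ M} = R.simples := by
      ext q
      constructor
      · rintro (⟨h1, _⟩ | ⟨h1, _⟩) <;> exact h1
      · intro hq
        by_cases hqM : q ∈ M
        · exact Or.inl ⟨hq, hqM⟩
        · exact Or.inr ⟨hq, hqM⟩
    have horth : ∀ a ∈ {q | q ∈ R.simples ∧ q ∈ M},
        ∀ b ∈ {q | q ∈ R.simples ∧ q ∉ M}, R.form a b = 0 := by
      rintro a ⟨haS, haM⟩ b ⟨hbS, hbM⟩
      by_contra hf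
      apply hbM
      have hsbW : sR R b ∈ R.W :=
        Subgroup.subset_closure ⟨b, hbS, sR_isRefl R (R.norm_one b hbS)⟩
      have hsb : sR R b a ∈ M := hMinv _ hsbW a haM
      have e1 : a - sR R b a = (2 * R.form a b) • b := by
        rw [sR_apply R (R.norm_one b hbS)]
        module
      have hne0 : (2 * R.form a b) ≠ 0 := by
        intro h
        apply hf
        linarith
      have e2 : b = (2 * R.form a b)⁻¹ • (a - sR R b a) := by
        rw [e1, smul_smul, inv_mul_cancel₀ hne0, one_smul]
      rw [e2]
      exact Submodule.smul_mem _ _ (Submodule.sub_mem _ haM hsb)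
    rcases hirr _ _ hAB horth with hA | hB
    · have hmem : p₀ ∈ ({q | q ∈ R.simples ∧ q ∈ M} : Set V) := ⟨hp₀, hp₀M⟩
      rw [hA] at hmem
      exact hmem
    · have hmem : p ∈ ({q | q ∈ R.simples ∧ q ∉ M} : Set V) := ⟨hp, hpM⟩
      rw [hB] at hmem
      exact hmem
  have hOroots : O ⊆ R.roots := by
    rintro x ⟨w, hwW, rfl⟩
    exact ⟨w * w₀, mul_mem hwW hw₀, p₀, hp₀, by rw [hαw]; rfl⟩
  have hspan1 : Submodule.span ℝ O = Submodule.span ℝ R.roots := by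
    apply le_antisymm
    · exact Submodule.span_mono hOroots
    · apply Submodule.span_le.mpr
      intro x hx
      have h1 : x ∈ Submodule.span ℝ R.simples := roots_sub_span R hx
      have h2 : Submodule.span ℝ R.simples ≤ M := Submodule.span_le.mpr hPiM
      exact h2 h1
  have hfaith : ∀ w ∈ R.W, (∀ x ∈ O, w x = x) → w = 1 := by
    intro w hwW hfixO
    apply fix_simples_eq_one R hwW
    intro p hp
    have hpM : p ∈ M := hPiM hp
    have hK : M ≤ LinearMap.ker ((↑w : V →ₗ[ℝ] V) - LinearMap.id) := by
      apply Submodule.span_le.mpr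
      intro x hx
      simp only [SetLike.mem_coe, LinearMap.mem_ker, LinearMap.sub_apply, LinearMap.id_apply,
        LinearEquiv.coe_coe, sub_eq_zero]
      exact hfixO x hx
    have hker := hK hpM
    simp only [LinearMap.mem_ker, LinearMap.sub_apply, LinearMap.id_apply,
      LinearEquiv.coe_coe, sub_eq_zero] at hker
    exact hker
  refine ⟨hspan1, hfaith, ?_, ?_⟩
  · -- conjugates of the stabilizer
    intro g hg
    have h1 := hg 1 (one_mem _)
    rw [inv_one, one_mul, mul_one] at h1
    obtain ⟨hgW, _⟩ := h1
    apply hfaith g hgW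
    rintro x ⟨u, huW, rfl⟩
    have h2 := (hg u huW).2
    calc g (u α) = (g * u) α := rfl
      _ = (u * (u⁻¹ * g * u)) α := by
          congr 1
          group
      _ = u ((u⁻¹ * g * u) α) := rfl
      _ = u α := by rw [h2]
  · -- finiteness
    intro hfin
    rw [← Set.finite_coe_iff]
    haveI : Finite ↥O := hfin.to_subtype
    have hinj : Function.Injective
        (fun (w : ↥(R.W : Set (V ≃ₗ[ℝ] V))) (x : ↥O) =>
          (⟨(w : V ≃ₗ[ℝ] V) x, hOO w w.2 x x.2⟩ : ↥O)) := by
      intro w₁ w₂ hΨ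
      have h12 : ∀ x (hx : x ∈ O), (w₁ : V ≃ₗ[ℝ] V) x = (w₂ : V ≃ₗ[ℝ] V) x := by
        intro x hx
        have := congrFun hΨ ⟨x, hx⟩
        exact congrArg Subtype.val this
      have hone : ((w₂ : V ≃ₗ[ℝ] V))⁻¹ * (w₁ : V ≃ₗ[ℝ] V) = 1 := by
        apply hfaith _ (mul_mem (inv_mem w₂.2) w₁.2)
        intro x hx
        show (((w₂ : V ≃ₗ[ℝ] V))⁻¹ * (w₁ : V ≃ₗ[ℝ] V)) x = x
        rw [mul_apply', h12 x hx, ← mul_apply', inv_mul_cancel, one_apply']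
      apply Subtype.ext
      exact (inv_mul_eq_one.mp hone).symm
    exact Finite.of_injective _ hinj
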